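/- (Combined inner-product lower bound under strong convexity.) Let each f_i : ℝ^d → ℝ be L-smooth and c-strongly convex with 0 < c ≤ L, let f := (1/n)∑_{i=1}^n f_i, and let x* be a minimizer of f. Then for any x_1,…,x_n ∈ ℝ^d with x̄ := (1/n)∑_i x_i and any x̂ ∈ ℝ^d: (1/n)∑_{i=1}^n ⟨∇f_i(x_i), x̂ − x*⟩ ≥ (1/2)(f(x̄) − f(x*)) + (c/4)‖x̂ − x*‖² − (2L/n)∑_{i=1}^n ‖x_i − x̄‖² − 4L‖x̂ − x̄‖². -/

import Mathlib

open Finset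
open scoped RealInnerProductSpace

noncomputable section

set_option maxHeartbeats 2000000 in
/-- **Combined inner-product lower bound under strong convexity.**
If each `f_i` is `L`-smooth and `c`-strongly convex with `0 < c ≤ L`, and `x*`
minimizes `f := (1/n)∑ᵢ f_i`, then for any points `x₁,…,x_n` with average `x̄`
and any `x̂`:
`(1/n)∑ᵢ ⟪∇f_i(x_i), x̂ − x*⟫ ≥ (1/2)(f(x̄) − f(x*)) + (c/4)‖x̂ − x*‖²
  − (2L/n)∑ᵢ ‖x_i − x̄‖² − 4L‖x̂ − x̄‖²`. -/
theorem combined_inner_product_lower_bound (d n : ℕ) (hn : 0 < n)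
    (L c : ℝ) (hc : 0 < c) (hcL : c ≤ L)
    (f : Fin n → EuclideanSpace ℝ (Fin d) → ℝ)
    (hdiff : ∀ i, Differentiable ℝ (f i))
    (hsmooth : ∀ i u v, ‖gradient (f i) u - gradient (f i) v‖ ≤ L * ‖u - v‖)
    (hsc : ∀ i u v, f i u + ⟪gradient (f i) u, v - u⟫ + (c / 2) * ‖v - u‖ ^ 2 ≤ f i v)
    (xstar : EuclideanSpace ℝ (Fin d))
    (hxstar : ∀ y, (n : ℝ)⁻¹ * ∑ i, f i xstar ≤ (n : ℝ)⁻¹ * ∑ i, f i y)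
    (x : Fin n → EuclideanSpace ℝ (Fin d))
    (xbar xhat : EuclideanSpace ℝ (Fin d))
    (hxbar : xbar = (n : ℝ)⁻¹ • ∑ i, x i) :
    (n : ℝ)⁻¹ * ∑ i, ⟪gradient (f i) (x i), xhat - xstar⟫
      ≥ (1 / 2) * ((n : ℝ)⁻¹ * ∑ i, f i xbar - (n : ℝ)⁻¹ * ∑ i, f i xstar)
        + (c / 4) * ‖xhat - xstar‖ ^ 2
        - (2 * L / n) * ∑ i, ‖x i - xbar‖ ^ 2
        - 4 * L * ‖xhat - xbar‖ ^ 2 := by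
  have hL : (0 : ℝ) < L := lt_of_lt_of_le hc hcL
  have hN : (0 : ℝ) < (n : ℝ) := by exact_mod_cast hn
  set g : Fin n → EuclideanSpace ℝ (Fin d) → EuclideanSpace ℝ (Fin d) :=
    fun i => gradient (f i) with hg
  -- minimality in sum form
  have hmin : ∀ y, ∑ i, f i xstar ≤ ∑ i, f i y := by
    intro y
    exact (mul_le_mul_iff_right₀ (inv_pos.2 hN)).mp (hxstar y)
  -- plain convexity
  have hconv : ∀ i u v, f i u + ⟪g i u, v - u⟫ ≤ f i v := by
    intro i u v
    have h := hsc i u v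
    nlinarith [sq_nonneg ‖v - u‖]
  -- weak descent lemma for the sum
  have hdescent : ∀ u v, ∑ i, f i v ≤
      ∑ i, f i u + ⟪∑ i, g i u, v - u⟫ + (n : ℝ) * L * ‖v - u‖ ^ 2 := by
    intro u v
    have key : ∀ i, f i v ≤ f i u + ⟪g i u, v - u⟫ + L * ‖v - u‖ ^ 2 := by
      intro i
      have h1 := hconv i v u
      have h5 : ⟪g i v, u - v⟫ = -⟪g i v, v - u⟫ := by
        rw [← inner_neg_right]; congr 1; abel
      have h2 : ⟪g i v, v - u⟫ = ⟪g i u, v - u⟫ + ⟪g i v - g i u, v - u⟫ := by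
        rw [inner_sub_left]; ring
      have h3 := real_inner_le_norm (g i v - g i u) (v - u)
      have h4 := mul_le_mul_of_nonneg_right (hsmooth i v u) (norm_nonneg (v - u))
      rw [h5] at h1
      nlinarith [h1, h2, h3, h4]
    calc ∑ i, f i v ≤ ∑ i, (f i u + ⟪g i u, v - u⟫ + L * ‖v - u‖ ^ 2) :=
          Finset.sum_le_sum (fun i _ => key i)
      _ = ∑ i, f i u + ⟪∑ i, g i u, v - u⟫ + (n : ℝ) * L * ‖v - u‖ ^ 2 := by
          rw [Finset.sum_add_distrib, Finset.sum_add_distrib, sum_inner,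
            Finset.sum_const, Finset.card_univ, Fintype.card_fin, nsmul_eq_mul]
          ring
  -- gradient norm bound at any point
  have hgrad_sq : ∀ u, ‖∑ i, g i u‖ ^ 2 ≤
      4 * ((n : ℝ) * L) * (∑ i, f i u - ∑ i, f i xstar) := by
    intro u
    set G := ∑ i, g i u with hG
    set s : ℝ := (n : ℝ) * L with hs
    have hspos : (0 : ℝ) < s := mul_pos hN hL
    set t : ℝ := 1 / (2 * s) with ht
    have htpos : (0 : ℝ) < t := by positivity
    have h1 := hdescent u (u - t • G)
    have h2 : (u - t • G) - u = -(t • G) := by abel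
    have h3 : ⟪G, (u - t • G) - u⟫ = -(t * ‖G‖ ^ 2) := by
      rw [h2, inner_neg_right, real_inner_smul_right, real_inner_self_eq_norm_sq]
    have h4 : ‖(u - t • G) - u‖ = t * ‖G‖ := by
      rw [h2, norm_neg, norm_smul, Real.norm_eq_abs, abs_of_pos htpos]
    have h5 := hmin (u - t • G)
    rw [h3, h4] at h1
    have h6 : t * ‖G‖ ^ 2 - s * t ^ 2 * ‖G‖ ^ 2 ≤ ∑ i, f i u - ∑ i, f i xstar := by
      nlinarith [h1, h5]
    have h8 : t * ‖G‖ ^ 2 - s * t ^ 2 * ‖G‖ ^ 2 = ‖G‖ ^ 2 / (4 * s) := by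
      rw [ht]; field_simp; ring
    rw [h8, div_le_iff₀ (by positivity)] at h6
    linarith [h6]
  -- main per-i inequality
  have hmain : ∀ i, f i xhat - f i xstar + (c / 2) * ‖x i - xstar‖ ^ 2
      + (c / 2 - L) * ‖xhat - x i‖ ^ 2 ≤ ⟪g i (x i), xhat - xstar⟫ := by
    intro i
    have h1 := hsc i (x i) xstar
    have h2 := hsc i xhat (x i)
    have h3 : |⟪g i (x i) - g i xhat, xhat - x i⟫| ≤ L * ‖xhat - x i‖ * ‖xhat - x i‖ := by
      calc |⟪g i (x i) - g i xhat, xhat - x i⟫|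
          ≤ ‖g i (x i) - g i xhat‖ * ‖xhat - x i‖ := abs_real_inner_le_norm _ _
        _ ≤ (L * ‖x i - xhat‖) * ‖xhat - x i‖ :=
            mul_le_mul_of_nonneg_right (hsmooth i (x i) xhat) (norm_nonneg _)
        _ = L * ‖xhat - x i‖ * ‖xhat - x i‖ := by rw [norm_sub_rev]
    have hsplit : ⟪g i (x i), xhat - xstar⟫ = ⟪g i (x i), x i - xstar⟫
        + ⟪g i xhat, xhat - x i⟫ + ⟪g i (x i) - g i xhat, xhat - x i⟫ := by
      have hd : xhat - xstar = (x i - xstar) + (xhat - x i) := by abel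
      rw [inner_sub_left, hd, inner_add_right]; ring
    have e1 : ⟪g i (x i), xstar - x i⟫ = -⟪g i (x i), x i - xstar⟫ := by
      rw [← inner_neg_right]; congr 1; abel
    have e2 : ⟪g i xhat, x i - xhat⟫ = -⟪g i xhat, xhat - x i⟫ := by
      rw [← inner_neg_right]; congr 1; abel
    have e3 : ‖xstar - x i‖ = ‖x i - xstar‖ := norm_sub_rev _ _
    have e4 : ‖x i - xhat‖ = ‖xhat - x i‖ := norm_sub_rev _ _
    rw [e1, e3] at h1
    rw [e2, e4] at h2
    rw [hsplit]
    have hsq : ‖xhat - x i‖ * ‖xhat - x i‖ = ‖xhat - x i‖ ^ 2 := by ring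
    linarith [h1, h2, (abs_le.mp h3).1, hsq]
  have hsum_main : ∑ i, f i xhat - ∑ i, f i xstar
      + (c / 2) * ∑ i, ‖x i - xstar‖ ^ 2
      + (c / 2 - L) * ∑ i, ‖xhat - x i‖ ^ 2
      ≤ ∑ i, ⟪g i (x i), xhat - xstar⟫ := by
    have h := Finset.sum_le_sum (fun i (_ : i ∈ Finset.univ) => hmain i)
    rw [Finset.sum_add_distrib, Finset.sum_add_distrib, Finset.sum_sub_distrib,
      ← Finset.mul_sum, ← Finset.mul_sum] at h
    exact h
  -- ∑ ‖x i − x*‖² lower bound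
  have hQ : (n : ℝ) * (1 / 2) * ‖xhat - xstar‖ ^ 2 - ∑ i, ‖xhat - x i‖ ^ 2
      ≤ ∑ i, ‖x i - xstar‖ ^ 2 := by
    have key : ∀ i, (1 / 2) * ‖xhat - xstar‖ ^ 2 - ‖xhat - x i‖ ^ 2
        ≤ ‖x i - xstar‖ ^ 2 := by
      intro i
      have hd : (xhat - x i) + (x i - xstar) = xhat - xstar := by abel
      have h := norm_add_le (xhat - x i) (x i - xstar)
      rw [hd] at h
      nlinarith [h, sq_nonneg (‖xhat - x i‖ - ‖x i - xstar‖), norm_nonneg (xhat - xstar),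
        norm_nonneg (xhat - x i), norm_nonneg (x i - xstar)]
    have h := Finset.sum_le_sum (fun i (_ : i ∈ Finset.univ) => key i)
    rw [Finset.sum_sub_distrib, Finset.sum_const, Finset.card_univ, Fintype.card_fin,
      nsmul_eq_mul] at h
    linarith [h]
  -- ∑ ‖xhat − x i‖² upper bound
  have hR : ∑ i, ‖xhat - x i‖ ^ 2
      ≤ (n : ℝ) * (2 * ‖xhat - xbar‖ ^ 2) + 2 * ∑ i, ‖x i - xbar‖ ^ 2 := by
    have key : ∀ i, ‖xhat - x i‖ ^ 2 ≤ 2 * ‖xhat - xbar‖ ^ 2 + 2 * ‖x i - xbar‖ ^ 2 := by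
      intro i
      have hd : (xhat - xbar) + (xbar - x i) = xhat - x i := by abel
      have h := norm_add_le (xhat - xbar) (xbar - x i)
      rw [hd, norm_sub_rev xbar (x i)] at h
      nlinarith [h, sq_nonneg (‖xhat - xbar‖ - ‖x i - xbar‖), norm_nonneg (xhat - x i),
        norm_nonneg (xhat - xbar), norm_nonneg (x i - xbar)]
    have h := Finset.sum_le_sum (fun i (_ : i ∈ Finset.univ) => key i)
    rw [Finset.sum_add_distrib, Finset.sum_const, Finset.card_univ, Fintype.card_fin,
      nsmul_eq_mul, ← Finset.mul_sum] at h
    linarith [h]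
  -- relate f(xbar) and f(xhat)
  have hPD : (1 / 2) * (∑ i, f i xbar - ∑ i, f i xstar)
      ≤ (∑ i, f i xhat - ∑ i, f i xstar) + 2 * ((n : ℝ) * L) * ‖xhat - xbar‖ ^ 2 := by
    set s : ℝ := (n : ℝ) * L with hs
    have hspos : (0 : ℝ) < s := mul_pos hN hL
    have h1 := hdescent xhat xbar
    have h2 := hgrad_sq xhat
    have h3 := real_inner_le_norm (∑ i, g i xhat) (xbar - xhat)
    have h4 : ‖xbar - xhat‖ = ‖xhat - xbar‖ := norm_sub_rev _ _
    rw [h4] at h1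
    rw [h4] at h3
    have h5 := hmin xhat
    have h7 : s * ((1 / 2) * (∑ i, f i xbar - ∑ i, f i xstar))
        ≤ s * ((∑ i, f i xhat - ∑ i, f i xstar) + 2 * s * ‖xhat - xbar‖ ^ 2) := by
      nlinarith [mul_le_mul_of_nonneg_left h1 hspos.le,
        mul_le_mul_of_nonneg_left h3 hspos.le, h2, h5,
        sq_nonneg (‖∑ i, g i xhat‖ - 4 * s * ‖xhat - xbar‖),
        mul_pos hspos hspos, sq_nonneg ‖xhat - xbar‖,
        mul_nonneg (mul_nonneg hspos.le hspos.le) (sq_nonneg ‖xhat - xbar‖)]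
    exact (mul_le_mul_iff_right₀ hspos).mp h7
  -- assemble the sum-form inequality
  have key : (1 / 2) * (∑ i, f i xbar - ∑ i, f i xstar)
      + (n : ℝ) * (c / 4) * ‖xhat - xstar‖ ^ 2
      - 2 * L * ∑ i, ‖x i - xbar‖ ^ 2
      - 4 * (n : ℝ) * L * ‖xhat - xbar‖ ^ 2
      ≤ ∑ i, ⟪g i (x i), xhat - xstar⟫ := by
    have hint1 := mul_le_mul_of_nonneg_left hQ (by positivity : (0 : ℝ) ≤ c / 2)
    have hint2 := mul_le_mul_of_nonneg_left hR hL.le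
    nlinarith [hsum_main, hPD, hint1, hint2]
  rw [ge_iff_le]
  have hfinal := mul_le_mul_of_nonneg_left key (inv_nonneg.mpr hN.le)
  calc (1 / 2) * ((n : ℝ)⁻¹ * ∑ i, f i xbar - (n : ℝ)⁻¹ * ∑ i, f i xstar)
        + (c / 4) * ‖xhat - xstar‖ ^ 2
        - (2 * L / n) * ∑ i, ‖x i - xbar‖ ^ 2
        - 4 * L * ‖xhat - xbar‖ ^ 2
      = (n : ℝ)⁻¹ * ((1 / 2) * (∑ i, f i xbar - ∑ i, f i xstar)
        + (n : ℝ) * (c / 4) * ‖xhat - xstar‖ ^ 2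
        - 2 * L * ∑ i, ‖x i - xbar‖ ^ 2
        - 4 * (n : ℝ) * L * ‖xhat - xbar‖ ^ 2) := by
        field_simp
    _ ≤ (n : ℝ)⁻¹ * ∑ i, ⟪g i (x i), xhat - xstar⟫ := hfinal

end
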